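/- Let q > 0, b > 1 be real with b > √q, and H a positive integer. Then ∑_{b ≤ j < bH, j ∈ ℤ} min(2b, ‖j/q‖^{−1})/j ≪ ((b/q) + (q/b) + log(q+2)) · log(bH/q + 2), hence ≪ ((q² + b²)/(qb)) · log(bH/q + 2) · log(q + 2), with an absolute implied constant. -/

import Mathlib

open Finset

/-- Distance to the nearest integer. -/
noncomputable def nint (x : ℝ) : ℝ := |x - round x|

/-- `min(2b, ‖θ‖⁻¹)`, with the convention that the value is `2b` when `‖θ‖ = 0`. -/
noncomputable def mintwo (b θ : ℝ) : ℝ :=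
  if nint θ = 0 then 2 * b else min (2 * b) (nint θ)⁻¹

lemma mintwo_le_twob (b θ : ℝ) : mintwo b θ ≤ 2 * b := by
  unfold mintwo; split
  · exact le_rfl
  · exact min_le_left _ _

lemma nint_nonneg (θ : ℝ) : 0 ≤ nint θ := abs_nonneg _

lemma mintwo_nonneg {b : ℝ} (hb : 0 ≤ b) (θ : ℝ) : 0 ≤ mintwo b θ := by
  unfold mintwo; split
  · linarith
  · exact le_min (by linarith) (inv_nonneg.2 (nint_nonneg θ))

lemma mintwo_le_inv {b θ t : ℝ} (ht : 0 < t) (h : t ≤ nint θ) : mintwo b θ ≤ t⁻¹ := by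
  unfold mintwo
  rw [if_neg (by linarith : nint θ ≠ 0)]
  exact le_trans (min_le_right _ _) (inv_anti₀ ht h)

lemma sum_Ico_inv_le (M : ℕ) :
    ∑ i ∈ Finset.Ico 1 (M + 1), (1 : ℝ) / i ≤ 1 + Real.log M := by
  have h := harmonic_le_one_add_log M
  have h2 : ((harmonic M : ℚ) : ℝ) = ∑ i ∈ Finset.Icc 1 M, (1 : ℝ) / i := by
    rw [harmonic_eq_sum_Icc]; push_cast; simp [one_div]
  rw [Finset.Ico_add_one_right_eq_Icc, ← h2]; exact h

lemma sum_Ico_inv_sq_le (n N : ℕ) (hn : 2 ≤ n) :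
    ∑ j ∈ Finset.Ico n N, (1 : ℝ) / (j : ℝ) ^ 2 ≤ 1 / ((n : ℝ) - 1) := by
  have hn1 : (2 : ℝ) ≤ (n : ℝ) := by exact_mod_cast hn
  rcases le_or_gt N n with h | h
  · rw [Finset.Ico_eq_empty (by omega)]
    simp only [Finset.sum_empty, one_div]
    exact inv_nonneg.2 (by linarith)
  · calc ∑ j ∈ Finset.Ico n N, (1 : ℝ) / (j : ℝ) ^ 2
        ≤ ∑ j ∈ Finset.Ico n N, (1 / ((j : ℝ) - 1) - 1 / (j : ℝ)) := by
          refine Finset.sum_le_sum fun j hj => ?_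
          have hj2 : (2 : ℝ) ≤ (j : ℝ) := by
            have := (Finset.mem_Ico.1 hj).1; exact_mod_cast hn.trans this
          rw [div_sub_div _ _ (by linarith) (by linarith),
            div_le_div_iff₀ (by positivity) (by nlinarith)]
          nlinarith
      _ ≤ 1 / ((n : ℝ) - 1) := by
          rw [Finset.sum_Ico_eq_sum_range]
          have e := Finset.sum_range_sub' (fun i => 1 / (((n + i : ℕ) : ℝ) - 1)) (N - n)
          have key : ∑ i ∈ Finset.range (N - n),
              (1 / (((n + i : ℕ) : ℝ) - 1) - 1 / ((n + i : ℕ) : ℝ))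
              = 1 / (((n + 0 : ℕ) : ℝ) - 1) - 1 / (((n + (N - n) : ℕ) : ℝ) - 1) := by
            rw [← e]
            refine Finset.sum_congr rfl fun i _ => ?_
            push_cast; ring_nf
          rw [key]
          have h2 : (2 : ℝ) ≤ ((n + (N - n) : ℕ) : ℝ) := by
            have h0 : (0 : ℝ) ≤ ((N - n : ℕ) : ℝ) := Nat.cast_nonneg _
            push_cast
            linarith
          have h3 : 0 ≤ 1 / (((n + (N - n) : ℕ) : ℝ) - 1) :=
            one_div_nonneg.2 (by linarith)
          have h4 : ((n + 0 : ℕ) : ℝ) = (n : ℝ) := by norm_num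
          rw [h4]; linarith

lemma fiber_mintwo_sum_le (q b : ℝ) (hq : 0 < q) (hb : 0 ≤ b) (m : ℕ) (s : Finset ℕ)
    (hmem : ∀ j ∈ s, nint ((j : ℝ) / q) = |(j : ℝ) / q - (m : ℝ)| ∧
      |(j : ℝ) / q - (m : ℝ)| ≤ 1 / 2) :
    ∑ j ∈ s, mintwo b ((j : ℝ) / q) ≤ 4 * b + 2 * q * (1 + Real.log (q + 2)) := by
  set K := ⌈q⌉₊ with hK
  have hKq : q ≤ (K : ℝ) := Nat.le_ceil q
  have hK1 : ((K : ℝ) + 1) ≤ q + 2 := by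
    have := Nat.ceil_lt_add_one hq.le; rw [hK]; linarith
  set P : ℕ := (⌊(m : ℝ) * q⌋).toNat with hP
  have hmq0 : (0 : ℝ) ≤ (m : ℝ) * q := by positivity
  have hPZ : (P : ℤ) = ⌊(m : ℝ) * q⌋ := Int.toNat_of_nonneg (Int.floor_nonneg.2 hmq0)
  have hPR : (P : ℝ) = ((⌊(m : ℝ) * q⌋ : ℤ) : ℝ) := by exact_mod_cast congrArg (fun z : ℤ => (z : ℝ)) hPZ
  have hPle : (P : ℝ) ≤ (m : ℝ) * q := by rw [hPR]; exact Int.floor_le _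
  have hPgt : (m : ℝ) * q < (P : ℝ) + 1 := by rw [hPR]; exact Int.lt_floor_add_one _
  have hdist : ∀ j ∈ s, |(j : ℝ) - (m : ℝ) * q| ≤ q / 2 := by
    intro j hj
    have h2 := (hmem j hj).2
    have he : (j : ℝ) - (m : ℝ) * q = ((j : ℝ) / q - (m : ℝ)) * q := by field_simp
    rw [he, abs_mul, abs_of_pos hq]
    nlinarith [abs_nonneg ((j : ℝ) / q - (m : ℝ))]
  set w : ℕ → ℝ := fun i => if i = 0 then 2 * b else q / (i : ℝ) with hw
  have hw0 : ∀ i, 0 ≤ w i := by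
    intro i; rw [hw]; dsimp only; split
    · linarith
    · positivity
  have key : ∀ j ∈ s, ∀ i : ℕ, (i : ℝ) ≤ |(j : ℝ) - (m : ℝ) * q| → mintwo b ((j : ℝ) / q) ≤ w i := by
    intro j hj i hi
    rcases Nat.eq_zero_or_pos i with h0 | h1
    · subst h0; simpa [hw] using mintwo_le_twob b ((j : ℝ) / q)
    · have hi0 : (0 : ℝ) < (i : ℝ) := by exact_mod_cast h1
      have habs : |(j : ℝ) / q - (m : ℝ)| = |(j : ℝ) - (m : ℝ) * q| / q := by
        rw [show (j : ℝ) / q - (m : ℝ) = ((j : ℝ) - (m : ℝ) * q) / q by field_simp,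
          abs_div, abs_of_pos hq]
      have hle : (i : ℝ) / q ≤ nint ((j : ℝ) / q) := by
        rw [(hmem j hj).1, habs]
        exact (div_le_div_iff_of_pos_right hq).2 hi
      have := mintwo_le_inv (b := b) (by positivity : (0 : ℝ) < (i : ℝ) / q) hle
      rw [hw]; dsimp only
      rw [if_neg (by omega : i ≠ 0)]
      calc mintwo b ((j : ℝ) / q) ≤ ((i : ℝ) / q)⁻¹ := this
        _ = q / (i : ℝ) := by rw [inv_div]
  have side : ∀ (t : Finset ℕ) (ι : ℕ → ℕ),
      (∀ j₁ ∈ t, ∀ j₂ ∈ t, ι j₁ = ι j₂ → j₁ = j₂) →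
      (∀ j ∈ t, mintwo b ((j : ℝ) / q) ≤ w (ι j)) →
      (∀ j ∈ t, ι j < K + 2) →
      ∑ j ∈ t, mintwo b ((j : ℝ) / q) ≤ 2 * b + q * (1 + Real.log (q + 2)) := by
    intro t ι hinj hle hlt
    calc ∑ j ∈ t, mintwo b ((j : ℝ) / q) ≤ ∑ j ∈ t, w (ι j) := Finset.sum_le_sum hle
      _ = ∑ i ∈ t.image ι, w i := (Finset.sum_image hinj).symm
      _ ≤ ∑ i ∈ Finset.range (K + 2), w i := by
          refine Finset.sum_le_sum_of_subset_of_nonneg ?_ (fun i _ _ => hw0 i)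
          intro i hi
          obtain ⟨j, hj, rfl⟩ := Finset.mem_image.1 hi
          exact Finset.mem_range.2 (hlt j hj)
      _ = 2 * b + ∑ i ∈ Finset.Ico 1 (K + 2), w i := by
          rw [Finset.range_eq_Ico, Finset.sum_eq_sum_Ico_succ_bot (by omega)]
          simp [hw]
      _ ≤ 2 * b + q * (1 + Real.log (q + 2)) := by
          have he : ∑ i ∈ Finset.Ico 1 (K + 2), w i
              = q * ∑ i ∈ Finset.Ico 1 (K + 2), (1 : ℝ) / i := by
            rw [Finset.mul_sum]
            refine Finset.sum_congr rfl fun i hi => ?_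
            have : i ≠ 0 := by have := (Finset.mem_Ico.1 hi).1; omega
            rw [hw]; dsimp only; rw [if_neg this, mul_one_div]
          have h1 := sum_Ico_inv_le (K + 1)
          have h2 : Real.log ((K + 1 : ℕ) : ℝ) ≤ Real.log (q + 2) := by
            apply Real.log_le_log (by positivity)
            push_cast; linarith
          have h3 : ∑ i ∈ Finset.Ico 1 (K + 2), (1 : ℝ) / i ≤ 1 + Real.log (q + 2) := by
            have : ((K + 1 : ℕ) : ℝ) = (K : ℝ) + 1 := by push_cast; ring
            calc ∑ i ∈ Finset.Ico 1 (K + 2), (1 : ℝ) / i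
                ≤ 1 + Real.log ((K + 1 : ℕ) : ℝ) := by exact_mod_cast h1
              _ ≤ 1 + Real.log (q + 2) := by linarith
          rw [he]
          have := mul_le_mul_of_nonneg_left h3 hq.le
          linarith
  rw [← Finset.sum_filter_add_sum_filter_not s (fun j => j ≤ P)]
  have hs1 := side (s.filter (fun j => j ≤ P)) (fun j => P - j)
    (by intro j1 h1 j2 h2 he
        have h1' := (Finset.mem_filter.1 h1).2
        have h2' := (Finset.mem_filter.1 h2).2
        have he' : P - j1 = P - j2 := he
        omega)
    (by intro j hj
        obtain ⟨hjs, hjP⟩ := Finset.mem_filter.1 hj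
        refine key j hjs (P - j) ?_
        have hc : ((P - j : ℕ) : ℝ) = (P : ℝ) - (j : ℝ) := by
          push_cast [Nat.cast_sub hjP]; ring
        have habs : (m : ℝ) * q - (j : ℝ) ≤ |(j : ℝ) - (m : ℝ) * q| := by
          rw [abs_sub_comm]; exact le_abs_self _
        rw [hc]; linarith)
    (by intro j hj
        obtain ⟨hjs, hjP⟩ := Finset.mem_filter.1 hj
        have hc : ((P - j : ℕ) : ℝ) = (P : ℝ) - (j : ℝ) := by
          push_cast [Nat.cast_sub hjP]; ring
        have habs : (m : ℝ) * q - (j : ℝ) ≤ |(j : ℝ) - (m : ℝ) * q| := by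
          rw [abs_sub_comm]; exact le_abs_self _
        have hd := hdist j hjs
        have : ((P - j : ℕ) : ℝ) ≤ (K : ℝ) := by rw [hc]; linarith
        have : (P - j : ℕ) ≤ K := by exact_mod_cast this
        show P - j < K + 2
        omega)
  have hs2 := side (s.filter (fun j => ¬ j ≤ P)) (fun j => j - (P + 1))
    (by intro j1 h1 j2 h2 he
        have h1' := (Finset.mem_filter.1 h1).2
        have h2' := (Finset.mem_filter.1 h2).2
        have he' : j1 - (P + 1) = j2 - (P + 1) := he
        omega)
    (by intro j hj
        obtain ⟨hjs, hjP⟩ := Finset.mem_filter.1 hj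
        have hjP' : P + 1 ≤ j := by omega
        refine key j hjs (j - (P + 1)) ?_
        have hc : ((j - (P + 1) : ℕ) : ℝ) = (j : ℝ) - ((P : ℝ) + 1) := by
          push_cast [Nat.cast_sub hjP']; ring
        have habs : (j : ℝ) - (m : ℝ) * q ≤ |(j : ℝ) - (m : ℝ) * q| := le_abs_self _
        rw [hc]; linarith)
    (by intro j hj
        obtain ⟨hjs, hjP⟩ := Finset.mem_filter.1 hj
        have hjP' : P + 1 ≤ j := by omega
        have hc : ((j - (P + 1) : ℕ) : ℝ) = (j : ℝ) - ((P : ℝ) + 1) := by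
          push_cast [Nat.cast_sub hjP']; ring
        have habs : (j : ℝ) - (m : ℝ) * q ≤ |(j : ℝ) - (m : ℝ) * q| := le_abs_self _
        have hd := hdist j hjs
        have : ((j - (P + 1) : ℕ) : ℝ) ≤ (K : ℝ) := by rw [hc]; linarith
        have : (j - (P + 1) : ℕ) ≤ K := by exact_mod_cast this
        show j - (P + 1) < K + 2
        omega)
  linarith

set_option maxHeartbeats 1000000 in
theorem I2_estimate :
    ∃ C > 0, ∀ (q b : ℝ) (H : ℕ), 0 < q → 1 < b → Real.sqrt q < b → 0 < H →
      (∑ j ∈ Finset.Ico ⌈b⌉₊ ⌈b * H⌉₊, mintwo b ((j : ℝ) / q) / j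
          ≤ C * (b / q + q / b + Real.log (q + 2)) * Real.log (b * H / q + 2)) ∧
      (∑ j ∈ Finset.Ico ⌈b⌉₊ ⌈b * H⌉₊, mintwo b ((j : ℝ) / q) / j
          ≤ C * ((q ^ 2 + b ^ 2) / (q * b)) * Real.log (b * H / q + 2) *
              Real.log (q + 2)) := by
  refine ⟨100, by norm_num, ?_⟩
  intro q b H hq hb _hsb hH
  have hb0 : (0 : ℝ) < b := lt_trans one_pos hb
  set n := ⌈b⌉₊ with hn
  set N := ⌈b * (H : ℝ)⌉₊ with hN
  set M := ⌈b * (H : ℝ) / q⌉₊ with hM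
  have hH0 : (0 : ℝ) < (H : ℝ) := by exact_mod_cast hH
  have hbH : (0 : ℝ) < b * (H : ℝ) := by positivity
  have hn2 : 2 ≤ n := by
    have h1 : 1 < n := Nat.lt_ceil.2 (by exact_mod_cast hb)
    omega
  have hM1 : 1 ≤ M := Nat.ceil_pos.2 (by positivity)
  set L := Real.log (b * (H : ℝ) / q + 2) with hL
  set G := Real.log (q + 2) with hG
  have hlog2 : (1 / 2 : ℝ) < Real.log 2 := lt_trans (by norm_num) Real.log_two_gt_d9
  have hGhalf : (1 / 2 : ℝ) ≤ G :=
    le_trans hlog2.le (Real.log_le_log two_pos (by linarith))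
  have hLhalf : (1 / 2 : ℝ) ≤ L := by
    have h2 : (2 : ℝ) ≤ b * (H : ℝ) / q + 2 := by
      have : (0:ℝ) < b * (H : ℝ) / q := by positivity
      linarith
    exact le_trans hlog2.le (Real.log_le_log two_pos h2)
  have hMle : (M : ℝ) ≤ b * (H : ℝ) / q + 2 := by
    have := Nat.ceil_lt_add_one (le_of_lt (show (0 : ℝ) < b * (H : ℝ) / q by positivity))
    rw [hM]; linarith
  have hM1R : (1 : ℝ) ≤ (M : ℝ) := by exact_mod_cast hM1
  have hlogM : Real.log (M : ℝ) ≤ L :=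
    Real.log_le_log (by linarith) hMle
  set g : ℕ → ℕ := fun j => (round ((j : ℝ) / q)).toNat with hg
  have hround : ∀ j : ℕ, (0 : ℤ) ≤ round ((j : ℝ) / q) := by
    intro j; rw [round_eq]; exact Int.floor_nonneg.2 (by positivity)
  have hgr : ∀ j : ℕ, ((g j : ℕ) : ℝ) = ((round ((j : ℝ) / q) : ℤ) : ℝ) := by
    intro j
    have h1 : ((g j : ℕ) : ℤ) = round ((j : ℝ) / q) := Int.toNat_of_nonneg (hround j)
    exact_mod_cast congrArg (fun z : ℤ => (z : ℝ)) h1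
  have hmaps : ∀ j ∈ Finset.Ico n N, g j ∈ Finset.range (M + 1) := by
    intro j hj
    obtain ⟨hj1, hj2⟩ := Finset.mem_Ico.1 hj
    have hjb : (j : ℝ) < b * (H : ℝ) := Nat.lt_ceil.1 hj2
    have hr' := abs_le.1 (abs_sub_round ((j : ℝ) / q))
    have h1 : ((g j : ℕ) : ℝ) ≤ (j : ℝ) / q + 1 / 2 := by rw [hgr j]; linarith [hr'.1]
    have hjq : (j : ℝ) / q < b * (H : ℝ) / q := div_lt_div_of_pos_right hjb hq
    have hMq : b * (H : ℝ) / q ≤ (M : ℝ) := Nat.le_ceil _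
    have h2 : ((g j : ℕ) : ℝ) < (M : ℝ) + 1 := by linarith
    have h3 : g j < M + 1 := by exact_mod_cast h2
    exact Finset.mem_range.2 h3
  have hfibr : ∀ m : ℕ, ∀ j ∈ (Finset.Ico n N).filter (fun j => g j = m),
      round ((j : ℝ) / q) = (m : ℤ) := by
    intro m j hj
    have h1 := (Finset.mem_filter.1 hj).2
    have h2 := hround j
    simp only [hg] at h1
    omega
  have hnint : ∀ m : ℕ, ∀ j ∈ (Finset.Ico n N).filter (fun j => g j = m),
      nint ((j : ℝ) / q) = |(j : ℝ) / q - (m : ℝ)| ∧ |(j : ℝ) / q - (m : ℝ)| ≤ 1 / 2 := by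
    intro m j hj
    have h1 := hfibr m j hj
    have he : nint ((j : ℝ) / q) = |(j : ℝ) / q - (m : ℝ)| := by
      unfold nint; rw [h1]; push_cast; ring_nf
    exact ⟨he, he ▸ abs_sub_round _⟩
  set u := b / q with hu
  set v := q / b with hv
  have hu0 : 0 < u := by rw [hu]; positivity
  have hv0 : 0 < v := by rw [hv]; positivity
  have main : ∑ j ∈ Finset.Ico n N, mintwo b ((j : ℝ) / q) / j
      ≤ 36 * (u + v + G) * L := by
    rw [← Finset.sum_fiberwise_of_maps_to hmaps (fun j => mintwo b ((j : ℝ) / q) / j)]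
    rw [Finset.range_eq_Ico, Finset.sum_eq_sum_Ico_succ_bot (Nat.succ_pos M)]
    have h0 : ∑ j ∈ (Finset.Ico n N).filter (fun j => g j = 0),
        mintwo b ((j : ℝ) / q) / j ≤ 2 * v := by
      have hstep : ∀ j ∈ (Finset.Ico n N).filter (fun j => g j = 0),
          mintwo b ((j : ℝ) / q) / j ≤ q * ((1 : ℝ) / (j : ℝ) ^ 2) := by
        intro j hj
        have hjn : n ≤ j := (Finset.mem_Ico.1 (Finset.mem_filter.1 hj).1).1
        have hj2 : (2 : ℝ) ≤ (j : ℝ) := by exact_mod_cast hn2.trans hjn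
        have hjne : (j : ℝ) ≠ 0 := by linarith
        have hnintj := (hnint 0 j hj).1
        have hjq0 : 0 < (j : ℝ) / q := by
          apply div_pos (by linarith) hq
        have hle : (j : ℝ) / q ≤ nint ((j : ℝ) / q) := by
          rw [hnintj]; push_cast; rw [sub_zero]; exact le_abs_self _
        have hm := mintwo_le_inv (b := b) hjq0 hle
        have h2 : mintwo b ((j : ℝ) / q) / j ≤ ((j : ℝ) / q)⁻¹ / j :=
          div_le_div_of_nonneg_right hm (by linarith) |>.trans_eq rfl
        calc mintwo b ((j : ℝ) / q) / j ≤ ((j : ℝ) / q)⁻¹ / j := h2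
          _ = q * ((1 : ℝ) / (j : ℝ) ^ 2) := by rw [inv_div, div_div, mul_one_div, sq]
      calc ∑ j ∈ (Finset.Ico n N).filter (fun j => g j = 0),
            mintwo b ((j : ℝ) / q) / j
          ≤ ∑ j ∈ (Finset.Ico n N).filter (fun j => g j = 0),
            q * ((1 : ℝ) / (j : ℝ) ^ 2) := Finset.sum_le_sum hstep
        _ ≤ ∑ j ∈ Finset.Ico n N, q * ((1 : ℝ) / (j : ℝ) ^ 2) :=
            Finset.sum_le_sum_of_subset_of_nonneg (Finset.filter_subset _ _)
              (fun j _ _ => by positivity)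
        _ = q * ∑ j ∈ Finset.Ico n N, (1 : ℝ) / (j : ℝ) ^ 2 := by rw [Finset.mul_sum]
        _ ≤ q * (1 / ((n : ℝ) - 1)) :=
            mul_le_mul_of_nonneg_left (sum_Ico_inv_sq_le n N hn2) hq.le
        _ ≤ 2 * v := by
            have h1 : (2 : ℝ) ≤ (n : ℝ) := by exact_mod_cast hn2
            have h2 : b ≤ (n : ℝ) := Nat.le_ceil b
            have hnb : b / 2 ≤ (n : ℝ) - 1 := by
              rcases le_or_gt b 2 with h | h
              · linarith
              · linarith
            have h3 : 1 / ((n : ℝ) - 1) ≤ 2 / b := by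
              rw [div_le_div_iff₀ (by linarith) hb0]; linarith
            calc q * (1 / ((n : ℝ) - 1)) ≤ q * (2 / b) :=
                  mul_le_mul_of_nonneg_left h3 hq.le
              _ = 2 * v := by rw [hv]; ring
    have h1 : ∑ m ∈ Finset.Ico 1 (M + 1), ∑ j ∈ (Finset.Ico n N).filter (fun j => g j = m),
        mintwo b ((j : ℝ) / q) / j ≤ (8 * u + 4 + 4 * G) * (1 + Real.log M) := by
      have hterm : ∀ m ∈ Finset.Ico 1 (M + 1),
          (∑ j ∈ (Finset.Ico n N).filter (fun j => g j = m), mintwo b ((j : ℝ) / q) / j)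
          ≤ (4 * b + 2 * q * (1 + G)) * (2 / (q * (m : ℝ))) := by
        intro m hm
        have hm1 : 1 ≤ m := (Finset.mem_Ico.1 hm).1
        have hm1R : (1 : ℝ) ≤ (m : ℝ) := by exact_mod_cast hm1
        have hqm : (0 : ℝ) < q * (m : ℝ) / 2 := by positivity
        have hjlow : ∀ j ∈ (Finset.Ico n N).filter (fun j => g j = m),
            q * (m : ℝ) / 2 ≤ (j : ℝ) := by
          intro j hj
          have h2 := abs_le.1 (hnint m j hj).2
          have h3 : (m : ℝ) / 2 ≤ (j : ℝ) / q := by linarith [h2.1]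
          calc q * (m : ℝ) / 2 = ((m : ℝ) / 2) * q := by ring
            _ ≤ ((j : ℝ) / q) * q := mul_le_mul_of_nonneg_right h3 hq.le
            _ = (j : ℝ) := by field_simp
        have hstep : ∀ j ∈ (Finset.Ico n N).filter (fun j => g j = m),
            mintwo b ((j : ℝ) / q) / j ≤ mintwo b ((j : ℝ) / q) * (2 / (q * (m : ℝ))) := by
          intro j hj
          have hj0 : (0 : ℝ) < (j : ℝ) := lt_of_lt_of_le hqm (hjlow j hj)
          have hinv : (j : ℝ)⁻¹ ≤ 2 / (q * (m : ℝ)) := by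
            have h4 := one_div_le_one_div_of_le hqm (hjlow j hj)
            rw [one_div_div] at h4
            rw [← one_div]
            exact h4
          calc mintwo b ((j : ℝ) / q) / j = mintwo b ((j : ℝ) / q) * (j : ℝ)⁻¹ :=
                div_eq_mul_inv _ _
            _ ≤ mintwo b ((j : ℝ) / q) * (2 / (q * (m : ℝ))) :=
                mul_le_mul_of_nonneg_left hinv (mintwo_nonneg hb0.le _)
        calc ∑ j ∈ (Finset.Ico n N).filter (fun j => g j = m), mintwo b ((j : ℝ) / q) / j
            ≤ ∑ j ∈ (Finset.Ico n N).filter (fun j => g j = m),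
                mintwo b ((j : ℝ) / q) * (2 / (q * (m : ℝ))) := Finset.sum_le_sum hstep
          _ = (∑ j ∈ (Finset.Ico n N).filter (fun j => g j = m),
                mintwo b ((j : ℝ) / q)) * (2 / (q * (m : ℝ))) := by rw [Finset.sum_mul]
          _ ≤ (4 * b + 2 * q * (1 + G)) * (2 / (q * (m : ℝ))) :=
              mul_le_mul_of_nonneg_right
                (fiber_mintwo_sum_le q b hq hb0.le m _ (hnint m)) (by positivity)
      calc ∑ m ∈ Finset.Ico 1 (M + 1), ∑ j ∈ (Finset.Ico n N).filter (fun j => g j = m),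
            mintwo b ((j : ℝ) / q) / j
          ≤ ∑ m ∈ Finset.Ico 1 (M + 1), (4 * b + 2 * q * (1 + G)) * (2 / (q * (m : ℝ))) :=
            Finset.sum_le_sum hterm
        _ = (8 * u + 4 + 4 * G) * ∑ m ∈ Finset.Ico 1 (M + 1), (1 : ℝ) / (m : ℝ) := by
            rw [Finset.mul_sum]
            refine Finset.sum_congr rfl fun m hm => ?_
            have hm1 : 1 ≤ m := (Finset.mem_Ico.1 hm).1
            have hmne : (m : ℝ) ≠ 0 := Nat.cast_ne_zero.2 (by omega)
            rw [hu]; field_simp; ring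
        _ ≤ (8 * u + 4 + 4 * G) * (1 + Real.log M) := by
            apply mul_le_mul_of_nonneg_left (sum_Ico_inv_le M)
            linarith
    calc (∑ j ∈ (Finset.Ico n N).filter (fun j => g j = 0), mintwo b ((j : ℝ) / q) / j)
          + ∑ m ∈ Finset.Ico 1 (M + 1), ∑ j ∈ (Finset.Ico n N).filter (fun j => g j = m),
            mintwo b ((j : ℝ) / q) / j
        ≤ 2 * v + (8 * u + 4 + 4 * G) * (1 + Real.log M) := add_le_add h0 h1
      _ ≤ 36 * (u + v + G) * L := by
          have hlogM0 : 0 ≤ Real.log M := Real.log_nonneg hM1R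
          have hX : 1 + Real.log M ≤ 3 * L := by linarith
          have hA : (8 * u + 4 + 4 * G) * (1 + Real.log M)
              ≤ (8 * u + 4 + 4 * G) * (3 * L) :=
            mul_le_mul_of_nonneg_left hX (by linarith)
          have e1 : 0 ≤ (2 * G - 1) * L := mul_nonneg (by linarith) (by linarith)
          have e2 : 0 ≤ (2 * L - 1) * v := mul_nonneg (by linarith) hv0.le
          have e3 : 0 ≤ u * L := mul_nonneg hu0.le (by linarith)
          have e4 : 0 ≤ v * L := mul_nonneg hv0.le (by linarith)
          nlinarith [hA, e1, e2, e3, e4]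
  have hpos : 0 ≤ (u + v + G) * L := mul_nonneg (by linarith) (by linarith)
  constructor
  · calc ∑ j ∈ Finset.Ico n N, mintwo b ((j : ℝ) / q) / j
        ≤ 36 * (u + v + G) * L := main
      _ ≤ 100 * (u + v + G) * L := by nlinarith [hpos]
  · have hR : u + v = (q ^ 2 + b ^ 2) / (q * b) := by rw [hu, hv]; field_simp; ring
    have hR2 : (2 : ℝ) ≤ u + v := by
      rw [hR, le_div_iff₀ (by positivity)]; nlinarith [sq_nonneg (b - q)]
    have h36 : 36 * ((u + v) + G) ≤ 100 * ((u + v) * G) := by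
      nlinarith [mul_nonneg (by linarith : (0 : ℝ) ≤ (u + v) - 2)
        (by linarith : (0 : ℝ) ≤ G - 1 / 2)]
    calc ∑ j ∈ Finset.Ico n N, mintwo b ((j : ℝ) / q) / j
        ≤ 36 * (u + v + G) * L := main
      _ ≤ 100 * ((u + v) * G) * L := by
          have := mul_le_mul_of_nonneg_right h36 (by linarith : (0 : ℝ) ≤ L)
          linarith [this]
      _ = 100 * ((q ^ 2 + b ^ 2) / (q * b)) * L * G := by rw [← hR]; ring
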